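/- Assume the grid-parity condition ρc/b − θ ≤ ρh + π and the condition ρh + π < P_D. For each λ > 0, let K11(λ) > 0 be the (1,1) entry of the unique symmetric positive-definite matrix solving the social planner's Riccati system with penalty parameter λ, and define the asymptotic Pareto price P*(λ) := (1 − K_c/K11(λ))·(ρc/b − θ) + (K_c/K11(λ))·(ρh + π) and the asymptotic Stackelberg price (with zero initial capacity) P^⋄₀(λ) := (1 − 1/ξ(λ))·P_D + (1/ξ(λ))·P_F⁰(λ), where K_f(λ) := (δ/2)·(−ρ + √(ρ² + 4λ/δ)), ξ(λ) := 2 + (λ/(σ²K_c))·(1 − λδ/(ρδ + K_f(λ))²), and P_F⁰(λ) := (ρh + π)·λδ/(ρδ + K_f(λ))². Then there exists λ₀ > 0 such that P^⋄₀(λ) > P*(λ) for all λ ≥ λ₀: for a sufficiently large commitment penalty, the Stackelberg long-term stationary price is larger than the Pareto price. -/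

import Mathlib

open Filter Topology

private lemma sqrt_tendsto_aux : Tendsto Real.sqrt atTop atTop := by
  apply tendsto_atTop_atTop.2
  intro M
  refine ⟨M ^ 2, fun x hx => ?_⟩
  rcases le_or_gt M 0 with hM | hM
  · exact hM.trans (Real.sqrt_nonneg x)
  · have : M = Real.sqrt (M ^ 2) := by
      rw [Real.sqrt_sq hM.le]
    rw [this]
    exact Real.sqrt_le_sqrt hx

set_option maxHeartbeats 1600000 in
/-- Proposition 4.3: under grid parity `ρc/b − θ ≤ ρh + π` and
`ρh + π < P_D`, if for each penalty `λ > 0`, `K11(λ)` is the (1,1) entry of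
the symmetric positive-definite solution of the social planner's Riccati
system, then for all sufficiently large `λ` the asymptotic Stackelberg price
`P⋄₀(λ)` (zero initial capacity) exceeds the asymptotic Pareto price `P*(λ)`. -/
theorem stmt_19 (ρ σ b γ δ η D : ℝ) (hρ : 0 < ρ) (hσ : 0 < σ) (hb : 0 < b)
    (hγ : 0 < γ) (hδ : 0 < δ) (hη : 0 < η) (hD : 0 < D) (hρσ : σ ^ 2 < ρ)
    (θ c h π : ℝ)
    (Kc PD : ℝ)
    (hKc : Kc = (γ / (2 * b ^ 2)) *
      (-(ρ - σ ^ 2) + Real.sqrt ((ρ - σ ^ 2) ^ 2 + 4 * b ^ 2 * η / γ)))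
    (hPD : PD = (ρ * c / b - θ) + 2 * σ ^ 2 * Kc * D)
    -- grid parity and admissibility conditions
    (hgrid : ρ * c / b - θ ≤ ρ * h + π)
    (hadm : ρ * h + π < PD)
    -- for each λ > 0, K11(λ) is the (1,1) entry of the symmetric
    -- positive-definite solution of the Riccati system with penalty λ
    (K11 : ℝ → ℝ)
    (hK11 : ∀ lam : ℝ, 0 < lam → ∃ K12 K22 : ℝ,
      ((b ^ 2 / γ) * (K11 lam) ^ 2 + (1 / δ) * K12 ^ 2
          + (ρ - σ ^ 2) * K11 lam - lam - η = 0 ∧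
        (b ^ 2 / γ) * K11 lam * K12 + (1 / δ) * K12 * K22 + ρ * K12 - lam = 0 ∧
        (b ^ 2 / γ) * K12 ^ 2 + (1 / δ) * K22 ^ 2 + ρ * K22 - lam = 0) ∧
      0 < K11 lam ∧ 0 < K11 lam * K22 - K12 ^ 2)
    -- the asymptotic Pareto and Stackelberg prices
    (Pstar Pdia : ℝ → ℝ)
    (hPstar : ∀ lam : ℝ, Pstar lam =
      (1 - Kc / K11 lam) * (ρ * c / b - θ) + (Kc / K11 lam) * (ρ * h + π))
    (Kf ξ PF0 : ℝ → ℝ)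
    (hKf : ∀ lam : ℝ, Kf lam = (δ / 2) * (-ρ + Real.sqrt (ρ ^ 2 + 4 * lam / δ)))
    (hξ : ∀ lam : ℝ, ξ lam =
      2 + (lam / (σ ^ 2 * Kc)) * (1 - lam * δ / (ρ * δ + Kf lam) ^ 2))
    (hPF0 : ∀ lam : ℝ, PF0 lam = (ρ * h + π) * (lam * δ / (ρ * δ + Kf lam) ^ 2))
    (hPdia : ∀ lam : ℝ, Pdia lam =
      (1 - 1 / ξ lam) * PD + (1 / ξ lam) * PF0 lam) :
    ∃ lam₀ : ℝ, 0 < lam₀ ∧ ∀ lam : ℝ, lam₀ ≤ lam → Pstar lam < Pdia lam := by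
  -- abbreviations
  set B : ℝ := ρ * c / b - θ with hB
  set H : ℝ := ρ * h + π with hH
  set s : ℝ → ℝ := fun lam => Real.sqrt (ρ ^ 2 + 4 * lam / δ) with hs
  -- Kc is positive
  have hKcpos : 0 < Kc := by
    rw [hKc]
    have h1 : 0 < γ / (2 * b ^ 2) := by positivity
    have h2 : ρ - σ ^ 2 < Real.sqrt ((ρ - σ ^ 2) ^ 2 + 4 * b ^ 2 * η / γ) := by
      rw [show ρ - σ ^ 2 = Real.sqrt ((ρ - σ ^ 2) ^ 2) from
        (Real.sqrt_sq (by linarith)).symm]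
      apply Real.sqrt_lt_sqrt (by positivity)
      have h3 : 0 < 4 * b ^ 2 * η / γ := by positivity
      have h4 : Real.sqrt ((ρ - σ ^ 2) ^ 2) ^ 2 = (ρ - σ ^ 2) ^ 2 :=
        Real.sq_sqrt (by positivity)
      linarith
    exact mul_pos h1 (by linarith)
  -- properties of s for lam ≥ 0
  have hquot : ∀ lam : ℝ, 0 ≤ lam → 0 ≤ 4 * lam / δ := by
    intro lam hlam
    exact div_nonneg (by linarith) hδ.le
  have hs_sq : ∀ lam : ℝ, 0 ≤ lam → (s lam) ^ 2 = ρ ^ 2 + 4 * lam / δ := by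
    intro lam hlam
    exact Real.sq_sqrt (by nlinarith [hquot lam hlam])
  have hs_ge : ∀ lam : ℝ, 0 ≤ lam → ρ ≤ s lam := by
    intro lam hlam
    rw [show ρ = Real.sqrt (ρ ^ 2) from (Real.sqrt_sq hρ.le).symm]
    exact Real.sqrt_le_sqrt (by nlinarith [hquot lam hlam])
  -- s tends to infinity
  have hs_top : Tendsto s atTop atTop := by
    apply sqrt_tendsto_aux.comp
    apply tendsto_atTop_add_const_left
    have : (fun lam : ℝ => 4 * lam / δ) = fun lam => lam * (4 / δ) := by
      funext lam; ring
    rw [this]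
    exact Tendsto.atTop_mul_const (by positivity) tendsto_id
  -- key identity for the T-term
  have hT : ∀ lam : ℝ, 0 ≤ lam →
      lam * δ / (ρ * δ + Kf lam) ^ 2 = 1 - 2 * ρ / (s lam + ρ) := by
    intro lam hlam
    have hsl := hs_sq lam hlam
    have hsg := hs_ge lam hlam
    have hden : ρ * δ + Kf lam = δ * (ρ + s lam) / 2 := by
      rw [hKf]; ring
    have hsp : 0 < s lam + ρ := by linarith
    have hsl' : δ * (s lam) ^ 2 = δ * ρ ^ 2 + 4 * lam := by
      rw [hsl]; field_simp
    rw [hden]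
    have hne : ρ + s lam ≠ 0 := by linarith
    field_simp
    linear_combination (-(s lam + ρ)) * hsl'
  -- identity for ξ
  have hξ' : ∀ lam : ℝ, 0 ≤ lam →
      ξ lam = 2 + (ρ * δ / (2 * σ ^ 2 * Kc)) * (s lam - ρ) := by
    intro lam hlam
    have hsl := hs_sq lam hlam
    have hsg := hs_ge lam hlam
    have hsp : 0 < s lam + ρ := by linarith
    have hsl' : δ * (s lam) ^ 2 = δ * ρ ^ 2 + 4 * lam := by
      rw [hsl]; field_simp
    rw [hξ, hT lam hlam]
    field_simp
    linear_combination (-ρ) * hsl'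
  -- ξ tends to infinity
  have hξ_top : Tendsto ξ atTop atTop := by
    have hcf : Tendsto (fun lam => 2 + (ρ * δ / (2 * σ ^ 2 * Kc)) * (s lam - ρ))
        atTop atTop := by
      apply tendsto_atTop_add_const_left
      apply Tendsto.const_mul_atTop (by positivity)
      exact tendsto_atTop_add_const_right _ _ hs_top
    refine Tendsto.congr' ?_ hcf
    filter_upwards [eventually_ge_atTop (0 : ℝ)] with lam hlam
    exact (hξ' lam hlam).symm
  -- 1/ξ tends to 0
  have hξinv : Tendsto (fun lam => 1 / ξ lam) atTop (𝓝 0) := by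
    simp only [one_div]; exact hξ_top.inv_tendsto_atTop
  -- PF0 tends to H
  have hPF0_tend : Tendsto PF0 atTop (𝓝 H) := by
    have h1 : Tendsto (fun lam => 2 * ρ / (s lam + ρ)) atTop (𝓝 0) := by
      have h2 : Tendsto (fun lam => s lam + ρ) atTop atTop :=
        tendsto_atTop_add_const_right _ _ hs_top
      simpa [div_eq_mul_inv] using (h2.inv_tendsto_atTop.const_mul (2 * ρ))
    have h3 : Tendsto (fun lam => H * (1 - 2 * ρ / (s lam + ρ))) atTop (𝓝 H) := by
      have := ((tendsto_const_nhds (x := (1:ℝ))).sub h1).const_mul H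
      simpa using this
    refine Tendsto.congr' ?_ h3
    filter_upwards [eventually_ge_atTop (0 : ℝ)] with lam hlam
    rw [hPF0, hT lam hlam]
  -- Pdia tends to PD
  have hPdia_tend : Tendsto Pdia atTop (𝓝 PD) := by
    have h0 : Tendsto (fun lam => (1 - 1 / ξ lam) * PD + (1 / ξ lam) * PF0 lam)
        atTop (𝓝 ((1 - 0) * PD + 0 * H)) :=
      (((tendsto_const_nhds (x := (1:ℝ))).sub hξinv).mul
        (tendsto_const_nhds (x := PD))).add (hξinv.mul hPF0_tend)
    have h1 : Tendsto (fun lam => (1 - 1 / ξ lam) * PD + (1 / ξ lam) * PF0 lam)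
        atTop (𝓝 PD) := by
      convert h0 using 2
      ring
    exact h1.congr fun lam => (hPdia lam).symm
  -- K11 tends to infinity
  have hK11_top : Tendsto K11 atTop atTop := by
    apply tendsto_atTop_atTop.2
    intro M0
    set M : ℝ := max M0 1 with hM
    have hM1 : (1 : ℝ) ≤ M := le_max_right _ _
    have hMpos : 0 < M := lt_of_lt_of_le one_pos hM1
    set C : ℝ := (b ^ 2 / γ) * M ^ 2 + (ρ - σ ^ 2) * M with hC
    have hCpos : 0 ≤ C := by
      have : 0 < ρ - σ ^ 2 := by linarith
      positivity
    refine ⟨max 1 (max (4 * M ^ 2 / δ) (2 * C + 1)), fun lam hlam => ?_⟩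
    have hlam1 : (1 : ℝ) ≤ lam := le_trans (le_max_left _ _) hlam
    have hlamM : 4 * M ^ 2 / δ ≤ lam :=
      le_trans (le_trans (le_max_left _ _) (le_max_right _ _)) hlam
    have hlamC : 2 * C + 1 ≤ lam :=
      le_trans (le_trans (le_max_right _ _) (le_max_right _ _)) hlam
    have hlampos : 0 < lam := lt_of_lt_of_le one_pos hlam1
    obtain ⟨K12, K22, ⟨heq1, heq2, heq3⟩, hK11p, hKdet⟩ := hK11 lam hlampos
    refine le_trans (le_max_left M0 1) ?_
    by_contra hcon
    push_neg at hcon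
    have hK11M : K11 lam < M := hcon
    -- K22 > 0
    have hK22p : 0 < K22 := by nlinarith [sq_nonneg K12]
    -- K22^2 ≤ δ * lam
    have hK22sq : K22 ^ 2 ≤ δ * lam := by
      have h12 : 0 ≤ (b ^ 2 / γ) * K12 ^ 2 := by positivity
      have h13 : (1 / δ) * K22 ^ 2 ≤ lam := by nlinarith [mul_pos hρ hK22p]
      calc K22 ^ 2 = δ * ((1 / δ) * K22 ^ 2) := by field_simp
        _ ≤ δ * lam := mul_le_mul_of_nonneg_left h13 hδ.le
    -- 2 * M * K22 ≤ δ * lam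
    have hMK22 : 2 * M * K22 ≤ δ * lam := by
      have h4 : 4 * M ^ 2 ≤ δ * lam := by
        have := hlamM
        calc 4 * M ^ 2 = (4 * M ^ 2 / δ) * δ := by field_simp
        _ ≤ lam * δ := by
          apply mul_le_mul_of_nonneg_right hlamM hδ.le
        _ = δ * lam := by ring
      nlinarith [hK22sq, hK22p.le, sq_nonneg (2 * M * K22 - δ * lam)]
    -- bound on K12^2
    have hK12sq : (1 / δ) * K12 ^ 2 ≤ lam / 2 := by
      have h1 : K12 ^ 2 < M * K22 := by nlinarith
      have h2 : M * K22 ≤ δ * lam / 2 := by linarith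
      calc (1 / δ) * K12 ^ 2 ≤ (1 / δ) * (δ * lam / 2) := by
            apply mul_le_mul_of_nonneg_left (by linarith) (by positivity)
        _ = lam / 2 := by field_simp
    -- contradiction from eq1
    have : lam + η ≤ C + lam / 2 := by
      have h5 : (b ^ 2 / γ) * (K11 lam) ^ 2 ≤ (b ^ 2 / γ) * M ^ 2 := by
        apply mul_le_mul_of_nonneg_left _ (by positivity)
        nlinarith
      have h6 : (ρ - σ ^ 2) * K11 lam ≤ (ρ - σ ^ 2) * M := by
        apply mul_le_mul_of_nonneg_left hK11M.le (by linarith)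
      nlinarith [heq1]
    clear_value C M
    linarith
  -- Pstar tends to B
  have hPstar_tend : Tendsto Pstar atTop (𝓝 B) := by
    have h1 : Tendsto (fun lam => Kc / K11 lam) atTop (𝓝 0) := by
      simpa [div_eq_mul_inv] using hK11_top.inv_tendsto_atTop.const_mul Kc
    have h2 : Tendsto (fun lam => B + (Kc / K11 lam) * (H - B)) atTop (𝓝 B) := by
      have := (h1.mul (tendsto_const_nhds (x := H - B))).const_add B
      simpa using this
    exact h2.congr fun lam => by rw [hPstar]; ring
  -- conclude
  have hBPD : B < PD := lt_of_le_of_lt hgrid hadm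
  have hfinal : ∀ᶠ lam in atTop, Pstar lam < Pdia lam :=
    hPstar_tend.eventually_lt hPdia_tend hBPD
  obtain ⟨a, ha⟩ := eventually_atTop.1 hfinal
  exact ⟨max a 1, lt_of_lt_of_le one_pos (le_max_right _ _),
    fun lam hlam => ha lam (le_trans (le_max_left _ _) hlam)⟩
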